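/- arXiv:2507.07520 — 8 statements merged into one kernel-verified Lean document; each statement's English description precedes it below -/
import Mathlib

section
/- Fix α ∈ [0,1] and z ≥ max{α, 1−α}. Define D̂_{α,z}(p,q,c) := −(1/(z+1)) · log(Σ_{i=1}^n p_i^α q_i^{1−α} c_i^{2z}) for probability vectors p, q ∈ ℝ^n and overlaps c ∈ [0,1]^n with c_i > 0 for some i with p_i q_i > 0. Then as z → ∞ (with α fixed), D̂_{α,z}(p,q,c) converges to D̂^T(p,q,c) := −log(max_i c_i^2), where the maximum is over indices i with p_i^α q_i^{1−α} c_i > 0. -/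
open Finset Filter

lemma aux_tendsto (a L : ℝ) :
    Tendsto (fun z : ℝ => -(1 / (z + 1)) * (a + z * L)) atTop (nhds (-L)) := by
  have h0 : Tendsto (fun z : ℝ => 1 / (z + 1)) atTop (nhds 0) := by
    have := (tendsto_atTop_add_const_right atTop (1 : ℝ) tendsto_id)
    simpa [one_div, Pi.inv_def] using this.inv_tendsto_atTop
  have h1 : Tendsto (fun z : ℝ => -L + (L - a) * (1 / (z + 1))) atTop (nhds (-L)) := by
    have h2 := (tendsto_const_nhds (x := -L) (f := atTop)).add (h0.const_mul (L - a))
    simpa using h2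
  refine h1.congr' ?_
  filter_upwards [eventually_gt_atTop 0] with z hz
  have hz1 : z + 1 ≠ 0 := by linarith
  field_simp
  ring

/-- The tropical relative entropy `D̂^T` is the pointwise limit `z → ∞` of the
`α`-`z` relative entropies `D̂_{α,z}` on pairs of cq-states with pure components. -/
theorem tropical_limit_of_alpha_z
    {n : ℕ} (α : ℝ) (hα : α ∈ Set.Icc (0 : ℝ) 1)
    (p q c : Fin n → ℝ)
    (hp : ∀ i, 0 ≤ p i) (hq : ∀ i, 0 ≤ q i)
    (hpsum : ∑ i, p i = 1) (hqsum : ∑ i, q i = 1)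
    (hc : ∀ i, c i ∈ Set.Icc (0 : ℝ) 1)
    (hex : ∃ i, 0 < p i ∧ 0 < q i ∧ 0 < c i) :
    Tendsto
      (fun z : ℝ =>
        -(1 / (z + 1)) * Real.log (∑ i, p i ^ α * q i ^ (1 - α) * c i ^ (2 * z)))
      atTop
      (nhds (-Real.log (⨆ i ∈ {i : Fin n | 0 < p i ^ α * q i ^ (1 - α) * c i}, (c i) ^ 2))) := by
  obtain ⟨i0, hp0, hq0, hc0⟩ := hex
  set w : Fin n → ℝ := fun i => p i ^ α * q i ^ (1 - α) with hw
  have hwnn : ∀ i, 0 ≤ w i := fun i =>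
    mul_nonneg (Real.rpow_nonneg (hp i) _) (Real.rpow_nonneg (hq i) _)
  have hcnn : ∀ i, 0 ≤ c i := fun i => (hc i).1
  have hc1 : ∀ i, c i ≤ 1 := fun i => (hc i).2
  set g : Fin n → ℝ := fun i => if 0 < w i * c i then c i ^ 2 else 0 with hg
  haveI : Nonempty (Fin n) := ⟨i0⟩
  obtain ⟨j, hj⟩ := Finite.exists_max g
  have hw0 : 0 < w i0 := mul_pos (Real.rpow_pos_of_pos hp0 _) (Real.rpow_pos_of_pos hq0 _)
  have hgi0 : 0 < g i0 := by
    simp only [hg, if_pos (mul_pos hw0 hc0)]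
    positivity
  have hgj : 0 < g j := lt_of_lt_of_le hgi0 (hj i0)
  have hjS : 0 < w j * c j := by
    by_contra h
    simp [hg, if_neg h] at hgj
  have hcj : 0 < c j := by
    by_contra h
    push_neg at h
    nlinarith [mul_nonneg (hwnn j) (neg_nonneg.2 h)]
  have hwj : 0 < w j := by
    nlinarith [mul_nonneg (hwnn j) (sub_nonneg.2 (hc1 j))]
  have hgj' : g j = c j ^ 2 := if_pos hjS
  -- identify the iSup
  have hM : (⨆ i ∈ {i : Fin n | 0 < p i ^ α * q i ^ (1 - α) * c i}, (c i) ^ 2) = c j ^ 2 := by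
    have hcong : ∀ i : Fin n,
        (⨆ _ : i ∈ {i : Fin n | 0 < p i ^ α * q i ^ (1 - α) * c i}, (c i) ^ 2) = g i := by
      intro i
      by_cases hi : 0 < w i * c i
      · have hi' : i ∈ {i : Fin n | 0 < p i ^ α * q i ^ (1 - α) * c i} := hi
        rw [ciSup_pos hi']
        simp [hg, if_pos hi]
      · haveI : IsEmpty (i ∈ {i : Fin n | 0 < p i ^ α * q i ^ (1 - α) * c i}) :=
          ⟨fun h => hi h⟩
        rw [iSup, Set.range_eq_empty, Real.sSup_empty]
        simp [hg, if_neg hi]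
    rw [iSup_congr hcong]
    refine le_antisymm (ciSup_le fun i => ?_) ?_
    · rw [← hgj']; exact hj i
    · rw [← hgj']
      exact le_ciSup (Set.Finite.bddAbove (Set.finite_range g)) j
  rw [hM]
  have hlogpow : -Real.log (c j ^ 2) = -(2 * Real.log (c j)) := by
    rw [Real.log_pow]; norm_num
  rw [hlogpow]
  set W := ∑ i, w i with hW
  have hWj : w j ≤ W := Finset.single_le_sum (fun i _ => hwnn i) (mem_univ j)
  have hWpos : 0 < W := lt_of_lt_of_le hwj hWj
  refine tendsto_of_tendsto_of_tendsto_of_le_of_le'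
    (aux_tendsto (Real.log W) (2 * Real.log (c j)))
    (aux_tendsto (Real.log (w j)) (2 * Real.log (c j))) ?_ ?_
  · -- lower bound
    filter_upwards [eventually_ge_atTop (1 : ℝ)] with z hz
    have h2z : 0 < 2 * z := by linarith
    have hz1 : 0 < z + 1 := by linarith
    have hfu : (∑ i, w i * c i ^ (2 * z)) ≤ W * c j ^ (2 * z) := by
      rw [hW, Finset.sum_mul]
      refine Finset.sum_le_sum fun i _ => ?_
      by_cases hi : 0 < w i * c i
      · have hgile : c i ^ 2 ≤ c j ^ 2 := by
          have := hj i
          rw [hgj'] at this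
          simpa [hg, if_pos hi] using this
        have hcij : c i ≤ c j := by nlinarith [hcnn i, hcnn j]
        exact mul_le_mul_of_nonneg_left
          (Real.rpow_le_rpow (hcnn i) hcij (le_of_lt h2z)) (hwnn i)
      · have h0 : w i * c i = 0 :=
          le_antisymm (not_lt.mp hi) (mul_nonneg (hwnn i) (hcnn i))
        rcases mul_eq_zero.mp h0 with h | h
        · rw [h]; simp
        · rw [h, Real.zero_rpow (ne_of_gt h2z), mul_zero]
          exact mul_nonneg (hwnn i) (Real.rpow_nonneg (hcnn j) _)
    have hfl : w j * c j ^ (2 * z) ≤ ∑ i, w i * c i ^ (2 * z) := by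
      exact Finset.single_le_sum (f := fun i => w i * c i ^ (2 * z))
        (fun i _ => mul_nonneg (hwnn i) (Real.rpow_nonneg (hcnn i) _)) (mem_univ j)
    have hfpos : 0 < ∑ i, w i * c i ^ (2 * z) :=
      lt_of_lt_of_le (mul_pos hwj (Real.rpow_pos_of_pos hcj _)) hfl
    have hlog2 : Real.log (∑ i, w i * c i ^ (2 * z))
        ≤ Real.log W + z * (2 * Real.log (c j)) := by
      have := Real.log_le_log hfpos hfu
      rwa [Real.log_mul (ne_of_gt hWpos) (ne_of_gt (Real.rpow_pos_of_pos hcj _)),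
        Real.log_rpow hcj, show (2 * z) * Real.log (c j) = z * (2 * Real.log (c j)) by ring]
        at this
    have := mul_le_mul_of_nonpos_left hlog2
      (neg_nonpos.2 (le_of_lt (one_div_pos.2 hz1)))
    linarith
  · -- upper bound
    filter_upwards [eventually_ge_atTop (1 : ℝ)] with z hz
    have h2z : 0 < 2 * z := by linarith
    have hz1 : 0 < z + 1 := by linarith
    have hfl : w j * c j ^ (2 * z) ≤ ∑ i, w i * c i ^ (2 * z) := by
      exact Finset.single_le_sum (f := fun i => w i * c i ^ (2 * z))
        (fun i _ => mul_nonneg (hwnn i) (Real.rpow_nonneg (hcnn i) _)) (mem_univ j)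
    have hfpos0 : 0 < w j * c j ^ (2 * z) :=
      mul_pos hwj (Real.rpow_pos_of_pos hcj _)
    have hlog1 : Real.log (w j) + z * (2 * Real.log (c j))
        ≤ Real.log (∑ i, w i * c i ^ (2 * z)) := by
      have := Real.log_le_log hfpos0 hfl
      rwa [Real.log_mul (ne_of_gt hwj) (ne_of_gt (Real.rpow_pos_of_pos hcj _)),
        Real.log_rpow hcj, show (2 * z) * Real.log (c j) = z * (2 * Real.log (c j)) by ring]
        at this
    have := mul_le_mul_of_nonpos_left hlog1
      (neg_nonpos.2 (le_of_lt (one_div_pos.2 hz1)))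
    linarith
end

section
/- Let α ∈ (0,1) and z ≥ 0, and suppose that for all θ ∈ (0, π/2) the inequality (cos(θ − π/4))^{2z} ≤ 2^{−α}((cos θ)^{2−2α} + (sin θ)^{2−2α}) holds. Then z ≥ α. -/
open Real Filter Topology

/-- Monotonicity constraint from the measurement channel forces `z ≥ α`. -/
theorem constraint_z_ge_alpha
    (α z : ℝ) (hα : α ∈ Set.Ioo (0 : ℝ) 1) (hz : 0 ≤ z)
    (h : ∀ θ ∈ Set.Ioo (0 : ℝ) (π / 2),
      (Real.cos (θ - π / 4)) ^ (2 * z) ≤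
        (2 : ℝ) ^ (-α) * ((Real.cos θ) ^ (2 - 2 * α) + (Real.sin θ) ^ (2 - 2 * α))) :
    α ≤ z := by
  obtain ⟨hα0, hα1⟩ := hα
  have hπ2 : (0 : ℝ) < π / 2 := by positivity
  have hne : (𝓝[Set.Ioo (0:ℝ) (π/2)] (π/2)).NeBot := right_nhdsWithin_Ioo_neBot hπ2
  have hexp : (0:ℝ) ≤ 2 - 2 * α := by linarith
  -- limit of LHS
  have hf : Filter.Tendsto (fun θ => (Real.cos (θ - π / 4)) ^ (2 * z))
      (𝓝[Set.Ioo (0:ℝ) (π/2)] (π/2)) (𝓝 ((Real.cos (π/2 - π/4)) ^ (2*z))) := by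
    apply Filter.Tendsto.mono_left _ nhdsWithin_le_nhds
    exact (((Real.continuous_cos.comp (continuous_id.sub continuous_const)).continuousAt
      ).rpow_const (Or.inr (by positivity)))
  have hg : Filter.Tendsto (fun θ => (2 : ℝ) ^ (-α) *
      ((Real.cos θ) ^ (2 - 2 * α) + (Real.sin θ) ^ (2 - 2 * α)))
      (𝓝[Set.Ioo (0:ℝ) (π/2)] (π/2))
      (𝓝 ((2 : ℝ) ^ (-α) * ((Real.cos (π/2)) ^ (2 - 2*α) + (Real.sin (π/2)) ^ (2 - 2*α)))) := by
    apply Filter.Tendsto.mono_left _ nhdsWithin_le_nhds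
    exact Filter.Tendsto.const_mul _
      (((Real.continuous_cos.continuousAt).rpow_const (Or.inr hexp)).add
        ((Real.continuous_sin.continuousAt).rpow_const (Or.inr hexp)))
  have key : (Real.cos (π/2 - π/4)) ^ (2*z) ≤
      (2 : ℝ) ^ (-α) * ((Real.cos (π/2)) ^ (2 - 2*α) + (Real.sin (π/2)) ^ (2 - 2*α)) := by
    refine le_of_tendsto_of_tendsto hf hg ?_
    filter_upwards [self_mem_nhdsWithin] with θ hθ using h θ hθ
  have hcos : Real.cos (π/2 - π/4) = Real.sqrt 2 / 2 := by
    rw [show π/2 - π/4 = π/4 by ring, Real.cos_pi_div_four]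
  rw [hcos, Real.cos_pi_div_two, Real.sin_pi_div_two,
    Real.zero_rpow (by linarith), Real.one_rpow] at key
  have hsq : Real.sqrt 2 / 2 = (2:ℝ) ^ (-(1/2) : ℝ) := by
    rw [Real.sqrt_eq_rpow, show (-(1/2):ℝ) = 1/2 - 1 by ring,
      Real.rpow_sub (by norm_num), Real.rpow_one]
  rw [hsq, ← Real.rpow_mul (by positivity)] at key
  have key2 : (2:ℝ) ^ (-z) ≤ (2:ℝ) ^ (-α) := by
    have : (-(1/2) : ℝ) * (2 * z) = -z := by ring
    simpa [this] using key
  have := (Real.rpow_le_rpow_left_iff (x := (2:ℝ)) one_lt_two).mp key2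
  linarith
end

section
/- Let α ∈ (0,1) and z ≥ 0, and suppose that for all θ ∈ (0, π/2) the inequality (cos(θ − π/4))^{2z} ≤ 2^{−(1−α)}((cos θ)^{2α} + (sin θ)^{2α}) holds. Then z ≥ 1 − α. -/
open Real

/-- Monotonicity constraint (with the states interchanged) forces `z ≥ 1 - α`. -/
theorem constraint_z_ge_one_sub_alpha
    (α z : ℝ) (hα : α ∈ Set.Ioo (0 : ℝ) 1) (hz : 0 ≤ z)
    (h : ∀ θ ∈ Set.Ioo (0 : ℝ) (π / 2),
      (Real.cos (θ - π / 4)) ^ (2 * z) ≤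
        (2 : ℝ) ^ (-(1 - α)) * ((Real.cos θ) ^ (2 * α) + (Real.sin θ) ^ (2 * α))) :
    1 - α ≤ z := by
  obtain ⟨hα0, hα1⟩ := hα
  have hpi : (0:ℝ) < π / 2 := by positivity
  -- the filter approaching π/2 within the open interval
  set L : Filter ℝ := nhdsWithin (π/2) (Set.Ioo (0:ℝ) (π/2)) with hL
  have hNB : L.NeBot := by
    rw [hL]
    refine mem_closure_iff_nhdsWithin_neBot.mp ?_
    rw [closure_Ioo (ne_of_lt hpi)]
    exact Set.right_mem_Icc.mpr hpi.le
  -- continuity of LHS at π/2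
  have hcos : Real.cos (π/2 - π/4) = Real.cos (π/4) := by ring_nf
  have hc4 : Real.cos (π/4) = Real.sqrt 2 / 2 := Real.cos_pi_div_four
  have hc4pos : (0:ℝ) < Real.cos (π/4) := by
    rw [hc4]; positivity
  have hf : Filter.Tendsto (fun θ => (Real.cos (θ - π / 4)) ^ (2 * z)) L
      (nhds ((Real.cos (π/4)) ^ (2*z))) := by
    have h1 : ContinuousAt (fun θ => (Real.cos (θ - π / 4)) ^ (2 * z)) (π/2) := by
      have hb : ContinuousAt (fun θ : ℝ => Real.cos (θ - π/4)) (π/2) := by fun_prop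
      exact hb.rpow_const (Or.inl (by rw [hcos]; exact ne_of_gt hc4pos))
    have := h1.tendsto
    rw [hcos] at this
    exact this.mono_left nhdsWithin_le_nhds
  -- continuity of RHS at π/2
  have hg : Filter.Tendsto (fun θ => (2 : ℝ) ^ (-(1 - α)) *
      ((Real.cos θ) ^ (2 * α) + (Real.sin θ) ^ (2 * α))) L
      (nhds ((2:ℝ) ^ (-(1-α)) * ((0:ℝ) ^ (2*α) + (1:ℝ) ^ (2*α)))) := by
    have h2 : ContinuousAt (fun θ : ℝ => (Real.cos θ) ^ (2 * α)) (π/2) := by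
      exact Real.continuous_cos.continuousAt.rpow_const (Or.inr (by linarith))
    have h3 : ContinuousAt (fun θ : ℝ => (Real.sin θ) ^ (2 * α)) (π/2) := by
      exact Real.continuous_sin.continuousAt.rpow_const (Or.inr (by linarith))
    have h4 : ContinuousAt (fun θ : ℝ => (2 : ℝ) ^ (-(1 - α)) *
        ((Real.cos θ) ^ (2 * α) + (Real.sin θ) ^ (2 * α))) (π/2) :=
      (continuousAt_const.mul (h2.add h3))
    have := h4.tendsto
    simp only [Real.cos_pi_div_two, Real.sin_pi_div_two] at this
    exact this.mono_left nhdsWithin_le_nhds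
  have key : (Real.cos (π/4)) ^ (2*z) ≤
      (2:ℝ) ^ (-(1-α)) * ((0:ℝ) ^ (2*α) + (1:ℝ) ^ (2*α)) := by
    exact le_of_tendsto_of_tendsto hf hg
      (Filter.eventually_of_mem self_mem_nhdsWithin (fun θ hθ => h θ hθ))
  have h0 : ((0:ℝ) ^ (2*α)) = 0 := Real.zero_rpow (by positivity)
  rw [h0, Real.one_rpow] at key
  have hlhs : (Real.cos (π/4)) ^ (2*z) = (2:ℝ) ^ (-z) := by
    have hb : Real.cos (π/4) = (2:ℝ) ^ (-(1/2) : ℝ) := by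
      rw [hc4, Real.rpow_neg (by norm_num), ← Real.sqrt_eq_rpow]
      have h2 : Real.sqrt 2 * Real.sqrt 2 = 2 := Real.mul_self_sqrt (by norm_num)
      have h2p : (0:ℝ) < Real.sqrt 2 := Real.sqrt_pos.mpr (by norm_num)
      field_simp
      exact Real.sq_sqrt (by norm_num)
    rw [hb, ← Real.rpow_mul (by norm_num)]
    congr 1
    ring
  rw [hlhs] at key
  have : (2:ℝ) ^ (-z) ≤ (2:ℝ) ^ (-(1-α)) := by linarith
  have := (Real.rpow_le_rpow_left_iff (by norm_num : (1:ℝ) < 2)).mp this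
  linarith
end

section
/- Let α > 1 and z ≤ 0. Then it is NOT the case that for all θ ∈ (0, π/2): (cos(θ − π/4))^{2z} ≥ 2^{−α}((cos θ)^{2−2α} + (sin θ)^{2−2α}). In other words, there exists θ ∈ (0, π/2) violating this inequality. -/
open Real

/-- For `α > 1` and `z ≤ 0` the reversed monotonicity inequality fails for some angle,
ruling out nondegenerate monotone homomorphisms into `ℝ₊` with classical parameter `α > 1`. -/
theorem no_homomorphism_alpha_gt_one
    (α z : ℝ) (hα : 1 < α) (hz : z ≤ 0) :
    ∃ θ ∈ Set.Ioo (0 : ℝ) (π / 2),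
      (Real.cos (θ - π / 4)) ^ (2 * z) <
        (2 : ℝ) ^ (-α) * ((Real.cos θ) ^ (2 - 2 * α) + (Real.sin θ) ^ (2 - 2 * α)) := by
  set p : ℝ := 2 - 2 * α with hp
  have hpneg : p < 0 := by simp [hp]; linarith
  set M : ℝ := (2 : ℝ) ^ (α - z) with hM
  have hMpos : 0 < M := Real.rpow_pos_of_pos two_pos _
  have hRpos : 0 < M ^ p⁻¹ := Real.rpow_pos_of_pos hMpos _
  set θ : ℝ := min (M ^ p⁻¹ / 2) (π / 4) with hθ
  have hθpos : 0 < θ := lt_min (by linarith) (by positivity)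
  have hθle : θ ≤ π / 4 := min_le_right _ _
  have hθlt : θ < π / 2 := lt_of_le_of_lt hθle (by linarith [pi_pos])
  refine ⟨θ, ⟨hθpos, hθlt⟩, ?_⟩
  have hsinpos : 0 < Real.sin θ := Real.sin_pos_of_pos_of_lt_pi hθpos
    (hθlt.trans (by linarith [pi_pos]))
  have hsinlt : Real.sin θ < M ^ p⁻¹ := by
    have h1 : Real.sin θ < θ := Real.sin_lt hθpos
    have h2 : θ ≤ M ^ p⁻¹ / 2 := min_le_left _ _
    linarith
  -- RHS lower bound
  have hsinrpow : M < (Real.sin θ) ^ p := by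
    have := Real.rpow_lt_rpow_of_neg hsinpos hsinlt hpneg
    rwa [Real.rpow_inv_rpow hMpos.le (ne_of_lt hpneg)] at this
  have hcospos : 0 < Real.cos θ := Real.cos_pos_of_mem_Ioo
    ⟨by linarith [pi_pos], hθlt⟩
  have hcosnn : 0 ≤ (Real.cos θ) ^ p := Real.rpow_nonneg hcospos.le _
  -- LHS upper bound
  have hcos4 : Real.cos (π / 4) ≤ Real.cos (θ - π / 4) := by
    rw [← Real.cos_abs (θ - π / 4)]
    apply Real.cos_le_cos_of_nonneg_of_le_pi (abs_nonneg _)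
    · linarith [pi_pos]
    · rw [abs_le]; constructor <;> [linarith; linarith]
  have hcos4pos : (0:ℝ) < Real.cos (π / 4) := by
    rw [Real.cos_pi_div_four]; positivity
  have hkey : Real.cos (π / 4) = (2:ℝ) ^ (-(1/2) : ℝ) := by
    rw [Real.cos_pi_div_four, Real.rpow_neg (by norm_num), ← Real.sqrt_eq_rpow]
    rw [div_eq_iff (by norm_num : (2:ℝ) ≠ 0), inv_mul_eq_div, eq_div_iff
      (by positivity : Real.sqrt 2 ≠ 0), Real.mul_self_sqrt (by norm_num : (0:ℝ) ≤ 2)]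
  have hLHS : (Real.cos (θ - π / 4)) ^ (2 * z) ≤ (2:ℝ) ^ (-z) := by
    have h := Real.rpow_le_rpow_of_nonpos hcos4pos hcos4 (by linarith : 2 * z ≤ 0)
    calc (Real.cos (θ - π / 4)) ^ (2 * z) ≤ (Real.cos (π / 4)) ^ (2 * z) := h
      _ = (2:ℝ) ^ (-z) := by
          rw [hkey, ← Real.rpow_mul (by norm_num)]
          congr 1; ring
  have hRHS : (2:ℝ) ^ (-z) < (2:ℝ) ^ (-α) * ((Real.cos θ) ^ p + (Real.sin θ) ^ p) := by
    have h1 : (2:ℝ) ^ (-α) * M = (2:ℝ) ^ (-z) := by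
      rw [hM, ← Real.rpow_add two_pos]; ring_nf
    calc (2:ℝ) ^ (-z) = (2:ℝ) ^ (-α) * M := h1.symm
      _ < (2:ℝ) ^ (-α) * (Real.sin θ) ^ p := by
          apply mul_lt_mul_of_pos_left hsinrpow (Real.rpow_pos_of_pos two_pos _)
      _ ≤ (2:ℝ) ^ (-α) * ((Real.cos θ) ^ p + (Real.sin θ) ^ p) := by
          apply mul_le_mul_of_nonneg_left _ (Real.rpow_pos_of_pos two_pos _).le
          linarith
  exact lt_of_le_of_lt hLHS hRHS
end

section
/- Let β > 0 and z ≤ 0. Then it is NOT the case that for all θ ∈ [π/4, π/2): (cos(θ − π/4))^{2z} ≥ 2^{−β} (cos θ)^{−2β}. That is, there exists θ ∈ [π/4, π/2) violating this inequality. -/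
open Real

/-- For `β > 0` and `z ≤ 0` the tropical monotonicity inequality fails for some angle,
ruling out tropical-real-valued nondegenerate monotone homomorphisms with `β > 0`. -/
theorem no_tropical_homomorphism_beta_pos
    (β z : ℝ) (hβ : 0 < β) (hz : z ≤ 0) :
    ∃ θ ∈ Set.Ico (π / 4) (π / 2),
      (Real.cos (θ - π / 4)) ^ (2 * z) <
        (2 : ℝ) ^ (-β) * (Real.cos θ) ^ (-(2 * β)) := by
  set e : ℝ := -((β - z) / (2 * β)) - 1 with he
  set c : ℝ := (2 : ℝ) ^ e with hc
  have hc0 : 0 < c := Real.rpow_pos_of_pos two_pos e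
  have hβz : 0 ≤ (β - z) / (2 * β) := div_nonneg (by linarith) (by linarith)
  have he1 : e ≤ -1 := by simp only [he]; linarith
  have hchalf : c ≤ 1 / 2 := by
    have h := Real.rpow_le_rpow_of_exponent_le (by norm_num : (1:ℝ) ≤ 2) he1
    have h2 : (2:ℝ) ^ (-1 : ℝ) = 1 / 2 := by
      rw [Real.rpow_neg_one]; norm_num
    rw [h2] at h
    exact h
  have hsq2 : (1:ℝ) < Real.sqrt 2 := by
    have := Real.sq_sqrt (by norm_num : (0:ℝ) ≤ 2)
    nlinarith [Real.sqrt_nonneg 2]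
  have hc1 : c ≤ 1 := hchalf.trans (by norm_num)
  set θ := Real.arccos c with hθ
  have hcosθ : Real.cos θ = c := Real.cos_arccos (by linarith) hc1
  have hθlt : θ < π / 2 := Real.arccos_lt_pi_div_two.2 hc0
  have hθ0 : 0 ≤ θ := Real.arccos_nonneg c
  have hθge : π / 4 ≤ θ := by
    by_contra h
    push_neg at h
    have hle : Real.cos (π / 4) ≤ Real.cos θ :=
      Real.cos_le_cos_of_nonneg_of_le_pi hθ0
        (by linarith [Real.pi_pos]) h.le
    rw [Real.cos_pi_div_four, hcosθ] at hle
    linarith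
  refine ⟨θ, ⟨hθge, hθlt⟩, ?_⟩
  -- bound the left side by 2 ^ (-z)
  have hcb : Real.sqrt 2 / 2 ≤ Real.cos (θ - π / 4) := by
    have h := Real.cos_le_cos_of_nonneg_of_le_pi (x := θ - π / 4) (y := π / 4)
      (by linarith) (by linarith [Real.pi_pos]) (by linarith)
    rwa [Real.cos_pi_div_four] at h
  have hsqpos : (0:ℝ) < Real.sqrt 2 / 2 := by linarith
  have hLle : (Real.cos (θ - π / 4)) ^ (2 * z) ≤ (Real.sqrt 2 / 2) ^ (2 * z) :=
    Real.rpow_le_rpow_of_nonpos hsqpos hcb (by linarith)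
  have h12 : (2:ℝ) ^ (-(1/2) : ℝ) = Real.sqrt 2 / 2 := by
    have h1 : ((2:ℝ) ^ (-(1/2) : ℝ)) ^ (2:ℕ) = 1 / 2 := by
      rw [← Real.rpow_natCast ((2:ℝ) ^ (-(1/2):ℝ)) 2, ← Real.rpow_mul (by norm_num)]
      norm_num
    have h2 : (Real.sqrt 2 / 2) ^ (2:ℕ) = 1 / 2 := by
      rw [div_pow, Real.sq_sqrt (by norm_num : (0:ℝ) ≤ 2)]; norm_num
    nlinarith [Real.rpow_pos_of_pos two_pos (-(1/2) : ℝ), hsqpos]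
  have hL : (Real.sqrt 2 / 2) ^ (2 * z) = (2:ℝ) ^ (-z) := by
    rw [← h12, ← Real.rpow_mul (by norm_num : (0:ℝ) ≤ 2)]
    congr 1; ring
  -- compute the right side
  have hR : (2 : ℝ) ^ (-β) * (Real.cos θ) ^ (-(2 * β)) = (2:ℝ) ^ (2 * β - z) := by
    rw [hcosθ, hc, ← Real.rpow_mul (by norm_num : (0:ℝ) ≤ 2),
      ← Real.rpow_add two_pos]
    congr 1
    field_simp [he]
    have h2 : 2 * β * ((β - z) / (2 * β)) = β - z := by field_simp
    rw [he]; linear_combination h2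
  have hlt : (2:ℝ) ^ (-z) < (2:ℝ) ^ (2 * β - z) :=
    Real.rpow_lt_rpow_of_exponent_lt (by norm_num) (by linarith)
  calc (Real.cos (θ - π / 4)) ^ (2 * z) ≤ (2:ℝ) ^ (-z) := by rw [← hL]; exact hLle
    _ < (2:ℝ) ^ (2 * β - z) := hlt
    _ = (2 : ℝ) ^ (-β) * (Real.cos θ) ^ (-(2 * β)) := hR.symm
end

section
/- Let |α⟩, |β⟩ be unit vectors in a Hilbert space with F := |⟨α|β⟩|² < 1, let (p'_i)_{i=1}^{n'} and (q'_i)_{i=1}^{n'} be probability vectors with all entries strictly positive, and let m ∈ ℕ be such that F^m p'_i < q'_i for all i. Define E^m_i := p'_i |α⟩⟨α|^{⊗m} + ((q'_i − F^m p'_i)/(1 − F^m)) |α_m^⊥⟩⟨α_m^⊥|, where |α_m^⊥⟩ is a unit vector in span{|α⟩^{⊗m}, |β⟩^{⊗m}} orthogonal to |α⟩^{⊗m}. Then (E^m_i)_{i=1}^{n'} is a POVM (each E^m_i is positive semidefinite and Σ_i E^m_i is the identity on that 2-dimensional span), and ⟨α^{⊗m}|E^m_i|α^{⊗m}⟩ =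 p'_i while ⟨β^{⊗m}|E^m_i|β^{⊗m}⟩ = q'_i. -/
open Finset

/-- The POVM construction in the power universality proof. Here `aM`, `bM`
stand for `|α⟩^{⊗m}`, `|β⟩^{⊗m}` (so `⟨aM|bM⟩ = ⟨α|β⟩^m`), and `aPerp` is a
unit vector in their span orthogonal to `aM`. The operators
`E i = p'_i |aM⟩⟨aM| + ((q'_i − F^m p'_i)/(1 − F^m)) |aPerp⟩⟨aPerp|` form a
POVM on the 2-dimensional span with `⟨aM|E i|aM⟩ = p'_i`, `⟨bM|E i|bM⟩ = q'_i`. -/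
theorem povm_construction
    {H : Type*} [NormedAddCommGroup H] [InnerProductSpace ℂ H]
    (a b aM bM aPerp : H) (m : ℕ) {n' : ℕ}
    (p q : Fin n' → ℝ)
    (ha : ‖a‖ = 1) (hb : ‖b‖ = 1) (haM : ‖aM‖ = 1) (hbM : ‖bM‖ = 1)
    (haP : ‖aPerp‖ = 1)
    (hover : (inner ℂ aM bM : ℂ) = (inner ℂ a b : ℂ) ^ m)
    (hperp : (inner ℂ aM aPerp : ℂ) = 0)
    (hspan : aPerp ∈ Submodule.span ℂ ({aM, bM} : Set H))
    (F : ℝ) (hF : F = ‖(inner ℂ a b : ℂ)‖ ^ 2) (hF1 : F < 1)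
    (hp : ∀ i, 0 < p i) (hq : ∀ i, 0 < q i)
    (hpsum : ∑ i, p i = 1) (hqsum : ∑ i, q i = 1)
    (hm : ∀ i, F ^ m * p i < q i)
    (E : Fin n' → H → H)
    (hE : ∀ i v, E i v =
      ((p i : ℂ)) • ((inner ℂ aM v : ℂ) • aM) +
      (((q i - F ^ m * p i) / (1 - F ^ m) : ℝ) : ℂ) • ((inner ℂ aPerp v : ℂ) • aPerp)) :
    (∀ i, ∀ v : H, 0 ≤ (inner ℂ v (E i v) : ℂ).re ∧ (inner ℂ v (E i v) : ℂ).im = 0) ∧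
    (∀ v ∈ Submodule.span ℂ ({aM, bM} : Set H), (∑ i, E i v) = v) ∧
    (∀ i, (inner ℂ aM (E i aM) : ℂ) = ((p i : ℝ) : ℂ)) ∧
    (∀ i, (inner ℂ bM (E i bM) : ℂ) = ((q i : ℝ) : ℂ)) := by
  -- basic numeric facts
  have hn : (Finset.univ : Finset (Fin n')).Nonempty := by
    by_contra h
    rw [Finset.not_nonempty_iff_eq_empty] at h
    rw [h] at hpsum; simp at hpsum
  have hF0 : 0 ≤ F := by rw [hF]; positivity
  have hFm1 : F ^ m < 1 := by
    rcases Nat.eq_zero_or_pos m with h0 | h0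
    · exfalso
      have hlt : (1 : ℝ) < 1 := by
        calc (1 : ℝ) = ∑ i, p i := hpsum.symm
          _ < ∑ i, q i := Finset.sum_lt_sum_of_nonempty hn (fun i _ => by
                have := hm i; simpa [h0] using this)
          _ = 1 := hqsum
      exact absurd hlt (lt_irrefl 1)
    · exact pow_lt_one₀ hF0 hF1 h0.ne'
  have hden : (0 : ℝ) < 1 - F ^ m := by linarith
  set c : Fin n' → ℝ := fun i => (q i - F ^ m * p i) / (1 - F ^ m) with hc
  have hc0 : ∀ i, 0 < c i := fun i => div_pos (by linarith [hm i]) hden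
  -- orthonormality facts
  have hperp' : (inner ℂ aPerp aM : ℂ) = 0 := by
    rw [← inner_conj_symm, hperp, map_zero]
  have haMaM : (inner ℂ aM aM : ℂ) = 1 := by
    rw [inner_self_eq_norm_sq_to_K, haM]; norm_num
  have haPaP : (inner ℂ aPerp aPerp : ℂ) = 1 := by
    rw [inner_self_eq_norm_sq_to_K, haP]; norm_num
  -- general formula for matrix elements of `E i`
  have hinner : ∀ i (w v : H), (inner ℂ w (E i v) : ℂ) =
      (p i : ℂ) * ((inner ℂ aM v : ℂ) * (inner ℂ w aM : ℂ))
      + (c i : ℂ) * ((inner ℂ aPerp v : ℂ) * (inner ℂ w aPerp : ℂ)) := by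
    intro i w v
    rw [hE]
    simp only [inner_add_right, inner_smul_right, hc]
    all_goals (push_cast; ring)
  -- decomposition of bM in terms of aM and aPerp
  obtain ⟨x, y, hxy⟩ := Submodule.mem_span_pair.mp hspan
  have hy : y ≠ 0 := by
    intro h
    subst h
    rw [zero_smul, add_zero] at hxy
    have hx : (inner ℂ aM aPerp : ℂ) = x := by
      rw [← hxy, inner_smul_right, haMaM, mul_one]
    rw [hperp] at hx
    have h0 : aPerp = 0 := by rw [← hxy, ← hx, zero_smul]
    rw [h0, norm_zero] at haP; norm_num at haP
  have hbM2 : bM = y⁻¹ • (aPerp - x • aM) := by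
    have h1 : y • bM = aPerp - x • aM := by
      rw [← hxy]; abel
    rw [← h1, smul_smul, inv_mul_cancel₀ hy, one_smul]
  have hbMdec : bM = (inner ℂ aM bM : ℂ) • aM + (inner ℂ aPerp bM : ℂ) • aPerp := by
    rw [hbM2]
    simp only [inner_smul_right, inner_sub_right, haMaM, haPaP, hperp, hperp',
      mul_one, smul_smul]
    rw [smul_sub, smul_smul]
    module
  -- |⟨aM,bM⟩|² = F^m and |⟨aPerp,bM⟩|² = 1 - F^m
  have hss : (inner ℂ aM bM : ℂ) * (inner ℂ bM aM : ℂ) = ((F ^ m : ℝ) : ℂ) := by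
    rw [← inner_conj_symm bM aM, Complex.mul_conj, hover, map_pow]
    norm_cast
    rw [hF, Complex.normSq_eq_norm_sq]
  have hbb : (inner ℂ bM bM : ℂ) = 1 := by
    rw [inner_self_eq_norm_sq_to_K, hbM]; norm_num
  have htt : (inner ℂ aPerp bM : ℂ) * (inner ℂ bM aPerp : ℂ) = ((1 - F ^ m : ℝ) : ℂ) := by
    have h := congrArg (fun w => (inner ℂ bM w : ℂ)) hbMdec
    simp only [inner_add_right, inner_smul_right, hbb] at h
    rw [hss] at h
    push_cast
    push_cast at h
    linear_combination -h
  -- the sum of the POVM elements acts as the orthogonal projection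
  have hsumc : ∑ i, c i = 1 := by
    simp only [hc, div_eq_mul_inv, ← Finset.sum_mul, Finset.sum_sub_distrib,
      ← Finset.mul_sum, hpsum, hqsum]
    field_simp
  have hsumE : ∀ v, ∑ i, E i v
      = (inner ℂ aM v : ℂ) • aM + (inner ℂ aPerp v : ℂ) • aPerp := by
    intro v
    simp only [hE]
    rw [Finset.sum_add_distrib, ← Finset.sum_smul, ← Finset.sum_smul]
    have h1 : ∑ i, ((p i : ℝ) : ℂ) = 1 := by
      rw [← Complex.ofReal_sum, hpsum, Complex.ofReal_one]
    have h2 : ∑ i, (((q i - F ^ m * p i) / (1 - F ^ m) : ℝ) : ℂ) = 1 := by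
      rw [← Complex.ofReal_sum]
      rw [show (∑ i, (q i - F ^ m * p i) / (1 - F ^ m)) = ∑ i, c i from rfl, hsumc]
      exact Complex.ofReal_one
    rw [h1, h2, one_smul, one_smul]
  refine ⟨?_, ?_, ?_, ?_⟩
  · -- positivity
    intro i v
    have key : (inner ℂ v (E i v) : ℂ)
        = ((p i * Complex.normSq (inner ℂ aM v) + c i * Complex.normSq (inner ℂ aPerp v) : ℝ) : ℂ) := by
      rw [hinner, ← inner_conj_symm v aM, ← inner_conj_symm v aPerp,
        Complex.mul_conj, Complex.mul_conj]
      push_cast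
      ring
    rw [key]
    constructor
    · rw [Complex.ofReal_re]
      exact add_nonneg (mul_nonneg (hp i).le (Complex.normSq_nonneg _))
        (mul_nonneg (hc0 i).le (Complex.normSq_nonneg _))
    · exact Complex.ofReal_im _
  · -- completeness on the span
    intro v hv
    rw [hsumE]
    induction hv using Submodule.span_induction with
    | mem z hz =>
      rcases hz with hz | hz
      · subst hz; rw [haMaM, hperp', one_smul, zero_smul, add_zero]
      · simp only [Set.mem_singleton_iff] at hz
        subst hz; exact hbMdec.symm
    | zero => simp
    | add u w _ _ hu hw =>
      simp only [inner_add_right, add_smul]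
      conv_rhs => rw [← hu, ← hw]
      abel
    | smul z u _ hu =>
      simp only [inner_smul_right, smul_smul]
      conv_rhs => rw [← hu]
      simp [smul_add, smul_smul]
  · -- value on aM
    intro i
    rw [hinner, haMaM, hperp, hperp']
    ring
  · -- value on bM
    intro i
    rw [hinner, hss, htt]
    have hreal : p i * F ^ m + c i * (1 - F ^ m) = q i := by
      simp only [hc]
      field_simp
      ring
    exact_mod_cast hreal
end

section
/- Let S be a preordered semiring, let x, y ∈ S, and suppose x^n ⪰ y^n for some n ∈ ℕ, n ≥ 1. Then with a := Σ_{ℓ=0}^{n−1} x^ℓ y^{n−1−ℓ}, one has a·x ⪰ a·y. In particular, large-sample ordering x^n ⪰ y^n implies catalytic ordering with catalyst a. -/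
open Finset

/-- In a preordered (commutative) semiring, large-sample ordering `xⁿ ⪰ yⁿ`
implies catalytic ordering with catalyst `a = Σ_{ℓ=0}^{n-1} x^ℓ y^{n-1-ℓ}`. -/
theorem large_sample_implies_catalytic
    {S : Type*} [CommSemiring S] [Preorder S]
    (addLe : ∀ (a x y : S), x ≤ y → x + a ≤ y + a)
    (mulLe : ∀ (a x y : S), x ≤ y → x * a ≤ y * a)
    (x y : S) (n : ℕ) (hn : 1 ≤ n) (h : y ^ n ≤ x ^ n) :
    (∑ ℓ ∈ Finset.range n, x ^ ℓ * y ^ (n - 1 - ℓ)) * y ≤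
      (∑ ℓ ∈ Finset.range n, x ^ ℓ * y ^ (n - 1 - ℓ)) * x := by
  obtain ⟨m, rfl⟩ : ∃ m, n = m + 1 := ⟨n - 1, (Nat.succ_pred_eq_of_pos hn).symm⟩
  set C : S := ∑ ℓ ∈ Finset.range m, x ^ (ℓ + 1) * y ^ (m - ℓ) with hC
  have hy : (∑ ℓ ∈ Finset.range (m + 1), x ^ ℓ * y ^ (m + 1 - 1 - ℓ)) * y
      = y ^ (m + 1) + C := by
    rw [Finset.sum_mul, Finset.sum_range_succ', hC, add_comm]
    congr 1
    · have : m + 1 - 1 - 0 = m := by omega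
      rw [this, pow_zero, one_mul, ← pow_succ]
    · apply Finset.sum_congr rfl
      intro ℓ hℓ
      have hℓm : ℓ < m := Finset.mem_range.mp hℓ
      have h1 : m + 1 - 1 - (ℓ + 1) = m - ℓ - 1 := by omega
      have h2 : m - ℓ - 1 + 1 = m - ℓ := by omega
      rw [h1, mul_assoc, ← pow_succ, h2]
  have hx : (∑ ℓ ∈ Finset.range (m + 1), x ^ ℓ * y ^ (m + 1 - 1 - ℓ)) * x
      = x ^ (m + 1) + C := by
    rw [Finset.sum_mul, Finset.sum_range_succ, hC, add_comm]
    congr 1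
    · have : m + 1 - 1 - m = 0 := by omega
      rw [this, pow_zero, mul_one, ← pow_succ]
    · apply Finset.sum_congr rfl
      intro ℓ hℓ
      have h1 : m + 1 - 1 - ℓ = m - ℓ := by omega
      rw [h1]; ring
  rw [hy, hx]
  exact addLe C _ _ h
end

section
/- Let P and Q be orthogonal projections on a finite-dimensional complex Hilbert space ℋ. Then ℋ decomposes as an orthogonal direct sum ℋ = ⊕_{i=1}^n ℋ_i of P-invariant and Q-invariant subspaces, each of dimension at most 2, such that the restrictions P|_{ℋ_i} and Q|_{ℋ_i} are projections of rank at most 1, and in particular the restrictions to 2-dimensional ℋ_i have rank exactly 1. -/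
open scoped InnerProductSpace
open Module

lemma finrank_span_singleton_le' {H : Type*} [NormedAddCommGroup H]
    [InnerProductSpace ℂ H] (v : H) : finrank ℂ (Submodule.span ℂ {v}) ≤ 1 := by
  by_cases hv : v = 0
  · subst hv
    rw [Submodule.span_zero_singleton]
    simp [finrank_bot]
  · rw [finrank_span_singleton hv]

lemma finrank_span_pair_le {H : Type*} [NormedAddCommGroup H]
    [InnerProductSpace ℂ H] [FiniteDimensional ℂ H] (a b : H) :
    finrank ℂ (Submodule.span ℂ {a, b}) ≤ 2 := by
  have h : Submodule.span ℂ ({a, b} : Set H)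
      = Submodule.span ℂ {a} ⊔ Submodule.span ℂ {b} := by
    rw [Submodule.span_insert]
  rw [h]
  have := Submodule.finrank_sup_add_finrank_inf_eq
    (Submodule.span ℂ ({a} : Set H)) (Submodule.span ℂ ({b} : Set H))
  have ha := finrank_span_singleton_le' a
  have hb := finrank_span_singleton_le' b
  omega

lemma jordan_block {H : Type*} [NormedAddCommGroup H] [InnerProductSpace ℂ H]
    [FiniteDimensional ℂ H] [Nontrivial H] (P Q : H →ₗ[ℂ] H)
    (hP : P ∘ₗ P = P) (hQ : Q ∘ₗ Q = Q) :
    ∃ V : Submodule ℂ H, V ≠ ⊥ ∧ finrank ℂ V ≤ 2 ∧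
      (∀ x ∈ V, P x ∈ V) ∧ (∀ x ∈ V, Q x ∈ V) ∧
      finrank ℂ (V.map P) ≤ 1 ∧ finrank ℂ (V.map Q) ≤ 1 ∧
      (finrank ℂ V = 2 → finrank ℂ (V.map P) = 1 ∧ finrank ℂ (V.map Q) = 1) := by
  have hPP : ∀ x, P (P x) = P x := fun x => by
    simpa using LinearMap.ext_iff.mp hP x
  have hQQ : ∀ x, Q (Q x) = Q x := fun x => by
    simpa using LinearMap.ext_iff.mp hQ x
  by_cases hP0 : P = 0
  · -- P = 0 case
    have hv : ∃ v : H, v ≠ 0 ∧ Q v ∈ Submodule.span ℂ ({v} : Set H) := by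
      by_cases hQ0 : Q = 0
      · obtain ⟨v, hv⟩ := exists_ne (0 : H)
        exact ⟨v, hv, by simp [hQ0]⟩
      · obtain ⟨x, hx⟩ : ∃ x, Q x ≠ 0 := by
          by_contra h
          push_neg at h
          exact hQ0 (LinearMap.ext fun x => h x)
        refine ⟨Q x, hx, ?_⟩
        rw [hQQ]
        exact Submodule.mem_span_singleton_self _
    obtain ⟨v, hv0, hQv⟩ := hv
    refine ⟨Submodule.span ℂ {v}, ?_, ?_, ?_, ?_, ?_, ?_, ?_⟩
    · exact Submodule.ne_bot_iff _ |>.mpr ⟨v, Submodule.mem_span_singleton_self _, hv0⟩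
    · have := finrank_span_singleton_le' v; omega
    · intro x _; simp [hP0]
    · intro x hx
      obtain ⟨c, rfl⟩ := Submodule.mem_span_singleton.mp hx
      rw [map_smul]
      exact Submodule.smul_mem _ _ hQv
    · rw [hP0, Submodule.map_zero]
      simp [finrank_bot]
    · refine le_trans (Submodule.finrank_mono ?_) (finrank_span_singleton_le' v)
      rw [Submodule.map_le_iff_le_comap]
      intro x hx
      obtain ⟨c, rfl⟩ := Submodule.mem_span_singleton.mp hx
      simp only [Submodule.mem_comap, map_smul]
      exact Submodule.smul_mem _ _ hQv
    · intro h2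
      rw [finrank_span_singleton hv0] at h2
      omega
  · -- P ≠ 0 : find an eigenvector of PQP inside range P
    obtain ⟨x, hx⟩ : ∃ x, P x ≠ 0 := by
      by_contra h
      push_neg at h
      exact hP0 (LinearMap.ext fun x => h x)
    have hRnt : Nontrivial (LinearMap.range P) := by
      refine nontrivial_of_ne ⟨P x, LinearMap.mem_range_self P x⟩ 0 ?_
      simp [Subtype.ext_iff, hx]
    have hinv : ∀ y ∈ LinearMap.range P, (P ∘ₗ Q ∘ₗ P) y ∈ LinearMap.range P := by
      intro y _
      simp only [LinearMap.comp_apply]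
      exact LinearMap.mem_range_self P _
    set T : Module.End ℂ (LinearMap.range P) := (P ∘ₗ Q ∘ₗ P).restrict hinv with hT
    obtain ⟨μ, hμ⟩ := Module.End.exists_eigenvalue T
    obtain ⟨u', hu'⟩ := hμ.exists_hasEigenvector
    set u : H := (u' : H) with hu
    have hu0 : u ≠ 0 := fun h => hu'.2 (Subtype.ext h)
    have hPu : P u = u := by
      obtain ⟨w, hw⟩ := u'.2
      rw [hu, ← hw, hPP]
    have hPQPu : P (Q u) = μ • u := by
      have := hu'.apply_eq_smul
      have h2 : ((T u' : LinearMap.range P) : H) = μ • u := by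
        rw [this]; simp [hu]
      rw [hT, LinearMap.restrict_coe_apply] at h2
      simp only [LinearMap.comp_apply] at h2
      rwa [hPu] at h2
    set V : Submodule ℂ H := Submodule.span ℂ {u, Q u} with hV
    have huV : u ∈ V := Submodule.subset_span (by simp)
    have hQuV : Q u ∈ V := Submodule.subset_span (by simp)
    have hmapP : V.map P ≤ Submodule.span ℂ {u} := by
      rw [hV, Submodule.map_span, Submodule.span_le]
      rintro _ ⟨y, hy, rfl⟩
      rcases hy with rfl | rfl
      · rw [hPu]; exact Submodule.mem_span_singleton_self _
      · rw [hPQPu]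
        exact Submodule.smul_mem _ _ (Submodule.mem_span_singleton_self _)
    have hmapQ : V.map Q ≤ Submodule.span ℂ {Q u} := by
      rw [hV, Submodule.map_span, Submodule.span_le]
      rintro _ ⟨y, hy, rfl⟩
      rcases hy with rfl | rfl
      · exact Submodule.mem_span_singleton_self _
      · rw [hQQ]; exact Submodule.mem_span_singleton_self _
    have hPinv : ∀ y ∈ V, P y ∈ V := by
      intro y hy
      have : P y ∈ V.map P := Submodule.mem_map_of_mem hy
      have := hmapP this
      exact Submodule.span_le.mpr (Set.singleton_subset_iff.mpr huV) this
    have hQinv : ∀ y ∈ V, Q y ∈ V := by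
      intro y hy
      have : Q y ∈ V.map Q := Submodule.mem_map_of_mem hy
      have := hmapQ this
      exact Submodule.span_le.mpr (Set.singleton_subset_iff.mpr hQuV) this
    refine ⟨V, ?_, ?_, hPinv, hQinv, ?_, ?_, ?_⟩
    · exact Submodule.ne_bot_iff _ |>.mpr ⟨u, huV, hu0⟩
    · exact finrank_span_pair_le u (Q u)
    · exact le_trans (Submodule.finrank_mono hmapP) (finrank_span_singleton_le' u)
    · exact le_trans (Submodule.finrank_mono hmapQ) (finrank_span_singleton_le' (Q u))
    · intro h2
      constructor
      · have hle : Submodule.span ℂ {u} ≤ V.map P := by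
          rw [Submodule.span_le, Set.singleton_subset_iff]
          exact ⟨u, huV, hPu⟩
        rw [le_antisymm hmapP hle, finrank_span_singleton hu0]
      · have hQu0 : Q u ≠ 0 := by
          intro h0
          have : V = Submodule.span ℂ {u} := by
            rw [hV, h0]
            rw [show ({u, (0:H)} : Set H) = insert u {0} from rfl,
              Submodule.span_insert]
            simp
          rw [this] at h2
          have := finrank_span_singleton_le' u
          omega
        have hle : Submodule.span ℂ {Q u} ≤ V.map Q := by
          rw [Submodule.span_le, Set.singleton_subset_iff]
          exact ⟨u, huV, rfl⟩
        rw [le_antisymm hmapQ hle, finrank_span_singleton hQu0]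

lemma jordan_trivial {H : Type*} [NormedAddCommGroup H] [InnerProductSpace ℂ H]
    [FiniteDimensional ℂ H] (hH : finrank ℂ H = 0) (P Q : H →ₗ[ℂ] H) :
    ∃ (n : ℕ) (V : Fin n → Submodule ℂ H),
      (∀ i j, i ≠ j → ∀ x ∈ V i, ∀ y ∈ V j, (inner ℂ x y : ℂ) = 0) ∧
      (⨆ i, V i) = ⊤ ∧
      (∀ i, Module.finrank ℂ (V i) ≤ 2) ∧
      (∀ i, ∀ x ∈ V i, P x ∈ V i) ∧
      (∀ i, ∀ x ∈ V i, Q x ∈ V i) ∧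
      (∀ i, Module.finrank ℂ (Submodule.map P (V i)) ≤ 1) ∧
      (∀ i, Module.finrank ℂ (Submodule.map Q (V i)) ≤ 1) ∧
      (∀ i, Module.finrank ℂ (V i) = 2 →
        Module.finrank ℂ (Submodule.map P (V i)) = 1 ∧
        Module.finrank ℂ (Submodule.map Q (V i)) = 1) := by
  have hsub : Subsingleton H := Module.finrank_zero_iff.mp hH
  refine ⟨0, Fin.elim0, fun i => i.elim0, ?_, fun i => i.elim0, fun i => i.elim0,
    fun i => i.elim0, fun i => i.elim0, fun i => i.elim0, fun i => i.elim0⟩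
  rw [iSup_of_empty]
  exact Subsingleton.elim _ _

universe u

lemma jordan_aux : ∀ (N : ℕ) {H : Type u} [NormedAddCommGroup H]
    [InnerProductSpace ℂ H] [FiniteDimensional ℂ H],
    finrank ℂ H ≤ N → ∀ (P Q : H →ₗ[ℂ] H),
    P ∘ₗ P = P → Q ∘ₗ Q = Q →
    (∀ x y : H, (inner ℂ (P x) y : ℂ) = inner ℂ x (P y)) →
    (∀ x y : H, (inner ℂ (Q x) y : ℂ) = inner ℂ x (Q y)) →
    ∃ (n : ℕ) (V : Fin n → Submodule ℂ H),
      (∀ i j, i ≠ j → ∀ x ∈ V i, ∀ y ∈ V j, (inner ℂ x y : ℂ) = 0) ∧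
      (⨆ i, V i) = ⊤ ∧
      (∀ i, Module.finrank ℂ (V i) ≤ 2) ∧
      (∀ i, ∀ x ∈ V i, P x ∈ V i) ∧
      (∀ i, ∀ x ∈ V i, Q x ∈ V i) ∧
      (∀ i, Module.finrank ℂ (Submodule.map P (V i)) ≤ 1) ∧
      (∀ i, Module.finrank ℂ (Submodule.map Q (V i)) ≤ 1) ∧
      (∀ i, Module.finrank ℂ (V i) = 2 →
        Module.finrank ℂ (Submodule.map P (V i)) = 1 ∧
        Module.finrank ℂ (Submodule.map Q (V i)) = 1) := by
  intro N
  induction N with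
  | zero =>
    intro H _ _ _ hdim P Q _ _ _ _
    exact jordan_trivial (Nat.le_zero.mp hdim) P Q
  | succ N ih =>
    intro H _ _ _ hdim P Q hP hQ hPsym hQsym
    by_cases h0 : finrank ℂ H = 0
    · exact jordan_trivial h0 P Q
    · have : Nontrivial H := Module.finrank_pos_iff.mp (Nat.pos_of_ne_zero h0)
      obtain ⟨V, hVbot, hV2, hVP, hVQ, hrP, hrQ, hr2⟩ := jordan_block P Q hP hQ
      set W : Submodule ℂ H := Vᗮ with hW
      have hPW : ∀ x ∈ W, P x ∈ W := by
        intro x hx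
        rw [Submodule.mem_orthogonal] at hx ⊢
        intro y hy
        rw [← hPsym y x]
        exact hx _ (hVP y hy)
      have hQW : ∀ x ∈ W, Q x ∈ W := by
        intro x hx
        rw [Submodule.mem_orthogonal] at hx ⊢
        intro y hy
        rw [← hQsym y x]
        exact hx _ (hVQ y hy)
      set P' : W →ₗ[ℂ] W := P.restrict hPW with hP'def
      set Q' : W →ₗ[ℂ] W := Q.restrict hQW with hQ'def
      have hcoeP : ∀ z : W, (P' z : H) = P z := fun z => LinearMap.restrict_coe_apply _ _ _
      have hcoeQ : ∀ z : W, (Q' z : H) = Q z := fun z => LinearMap.restrict_coe_apply _ _ _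
      have hP' : P' ∘ₗ P' = P' := by
        ext z
        simp only [LinearMap.comp_apply, hcoeP]
        simpa using LinearMap.ext_iff.mp hP z
      have hQ' : Q' ∘ₗ Q' = Q' := by
        ext z
        simp only [LinearMap.comp_apply, hcoeQ]
        simpa using LinearMap.ext_iff.mp hQ z
      have hP'sym : ∀ x y : W, (inner ℂ (P' x) y : ℂ) = inner ℂ x (P' y) := by
        intro x y
        rw [Submodule.coe_inner, Submodule.coe_inner, hcoeP, hcoeP]
        exact hPsym x y
      have hQ'sym : ∀ x y : W, (inner ℂ (Q' x) y : ℂ) = inner ℂ x (Q' y) := by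
        intro x y
        rw [Submodule.coe_inner, Submodule.coe_inner, hcoeQ, hcoeQ]
        exact hQsym x y
      have hdimW : finrank ℂ W ≤ N := by
        have h1 : finrank ℂ V + finrank ℂ W = finrank ℂ H :=
          Submodule.finrank_add_finrank_orthogonal V
        have h2 : 0 < finrank ℂ V := by
          rw [Module.finrank_pos_iff, Submodule.nontrivial_iff_ne_bot]
          exact hVbot
        omega
      obtain ⟨n, Ws, horth, hsup, hdim2, hWP, hWQ, hrkP, hrkQ, hrk2⟩ :=
        ih hdimW P' Q' hP' hQ' hP'sym hQ'sym
      set Vs : Fin (n + 1) → Submodule ℂ H :=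
        Fin.cons V (fun i => (Ws i).map W.subtype) with hVs
      have hVs0 : Vs 0 = V := rfl
      have hVsS : ∀ i : Fin n, Vs i.succ = (Ws i).map W.subtype := fun i => rfl
      have hmemW : ∀ (i : Fin n) (x : H), x ∈ Vs i.succ → x ∈ W := by
        intro i x hx
        exact Submodule.map_subtype_le W (Ws i) hx
      -- commutation of maps
      have hcommP : P ∘ₗ W.subtype = W.subtype ∘ₗ P' := by
        ext z
        simp only [LinearMap.comp_apply, Submodule.subtype_apply]
        exact (hcoeP z).symm
      have hcommQ : Q ∘ₗ W.subtype = W.subtype ∘ₗ Q' := by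
        ext z
        simp only [LinearMap.comp_apply, Submodule.subtype_apply]
        exact (hcoeQ z).symm
      have hmapPS : ∀ i : Fin n, (Vs i.succ).map P = ((Ws i).map P').map W.subtype := by
        intro i
        rw [hVsS, ← Submodule.map_comp, hcommP, Submodule.map_comp]
      have hmapQS : ∀ i : Fin n, (Vs i.succ).map Q = ((Ws i).map Q').map W.subtype := by
        intro i
        rw [hVsS, ← Submodule.map_comp, hcommQ, Submodule.map_comp]
      refine ⟨n + 1, Vs, ?_, ?_, ?_, ?_, ?_, ?_, ?_, ?_⟩
      · -- orthogonality
        intro i j hij x hx y hy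
        induction i using Fin.cases with
        | zero =>
          induction j using Fin.cases with
          | zero => exact absurd rfl hij
          | succ j =>
            have hyW : y ∈ W := hmemW j y hy
            exact (Submodule.mem_orthogonal V y).mp hyW x hx
        | succ i =>
          induction j using Fin.cases with
          | zero =>
            have hxW : x ∈ W := hmemW i x hx
            exact (Submodule.mem_orthogonal' V x).mp hxW y hy
          | succ j =>
            have hij' : i ≠ j := fun h => hij (by rw [h])
            rw [hVsS] at hx hy
            obtain ⟨x', hx', rfl⟩ := hx
            obtain ⟨y', hy', rfl⟩ := hy
            have := horth i j hij' x' hx' y' hy'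
            rwa [Submodule.coe_inner] at this
      · -- supremum is ⊤
        apply le_antisymm le_top
        have hWsup : (⨆ i, (Ws i).map W.subtype) = W := by
          rw [← Submodule.map_iSup, hsup, Submodule.map_subtype_top]
        have : V ⊔ W ≤ ⨆ i, Vs i := by
          apply sup_le
          · exact hVs0 ▸ le_iSup Vs 0
          · rw [← hWsup]
            apply iSup_le
            intro i
            exact (hVsS i) ▸ le_iSup Vs i.succ
        rw [Submodule.sup_orthogonal_of_hasOrthogonalProjection (K := V)] at this
        exact this
      · -- dimension ≤ 2
        intro i
        induction i using Fin.cases with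
        | zero => exact hV2
        | succ i =>
          rw [hVsS, Submodule.finrank_map_subtype_eq]
          exact hdim2 i
      · -- P-invariance
        intro i
        induction i using Fin.cases with
        | zero => exact hVP
        | succ i =>
          intro x hx
          rw [hVsS] at hx ⊢
          obtain ⟨x', hx', rfl⟩ := hx
          refine ⟨P' x', hWP i x' hx', (hcoeP x').symm⟩
      · -- Q-invariance
        intro i
        induction i using Fin.cases with
        | zero => exact hVQ
        | succ i =>
          intro x hx
          rw [hVsS] at hx ⊢
          obtain ⟨x', hx', rfl⟩ := hx
          refine ⟨Q' x', hWQ i x' hx', (hcoeQ x').symm⟩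
      · -- rank of P ≤ 1
        intro i
        induction i using Fin.cases with
        | zero => exact hrP
        | succ i =>
          rw [hmapPS, Submodule.finrank_map_subtype_eq]
          exact hrkP i
      · -- rank of Q ≤ 1
        intro i
        induction i using Fin.cases with
        | zero => exact hrQ
        | succ i =>
          rw [hmapQS, Submodule.finrank_map_subtype_eq]
          exact hrkQ i
      · -- rank exactly 1 on 2-dimensional blocks
        intro i
        induction i using Fin.cases with
        | zero => exact hr2
        | succ i =>
          intro h2
          rw [hVsS, Submodule.finrank_map_subtype_eq] at h2
          obtain ⟨e1, e2⟩ := hrk2 i h2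
          constructor
          · rw [hmapPS, Submodule.finrank_map_subtype_eq]; exact e1
          · rw [hmapQS, Submodule.finrank_map_subtype_eq]; exact e2

/-- Jordan's Lemma: two orthogonal projections on a finite-dimensional complex
Hilbert space can be simultaneously block-diagonalized into mutually orthogonal
invariant subspaces of dimension at most 2, on which both projections restrict
to projections of rank at most 1 (of rank exactly 1 on 2-dimensional blocks). -/
theorem jordan_lemma
    {H : Type*} [NormedAddCommGroup H] [InnerProductSpace ℂ H]
    [FiniteDimensional ℂ H]
    (P Q : H →ₗ[ℂ] H)
    (hP : P ∘ₗ P = P) (hQ : Q ∘ₗ Q = Q)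
    (hPsym : ∀ x y : H, (inner ℂ (P x) y : ℂ) = inner ℂ x (P y))
    (hQsym : ∀ x y : H, (inner ℂ (Q x) y : ℂ) = inner ℂ x (Q y)) :
    ∃ (n : ℕ) (V : Fin n → Submodule ℂ H),
      (∀ i j, i ≠ j → ∀ x ∈ V i, ∀ y ∈ V j, (inner ℂ x y : ℂ) = 0) ∧
      (⨆ i, V i) = ⊤ ∧
      (∀ i, Module.finrank ℂ (V i) ≤ 2) ∧
      (∀ i, ∀ x ∈ V i, P x ∈ V i) ∧
      (∀ i, ∀ x ∈ V i, Q x ∈ V i) ∧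
      (∀ i, Module.finrank ℂ (Submodule.map P (V i)) ≤ 1) ∧
      (∀ i, Module.finrank ℂ (Submodule.map Q (V i)) ≤ 1) ∧
      (∀ i, Module.finrank ℂ (V i) = 2 →
        Module.finrank ℂ (Submodule.map P (V i)) = 1 ∧
        Module.finrank ℂ (Submodule.map Q (V i)) = 1) :=
  jordan_aux (Module.finrank ℂ H) le_rfl P Q hP hQ hPsym hQsym
end
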